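/- arXiv:2511.10157 — 2 statements merged into one kernel-verified Lean document; each statement's English description precedes it below -/
import Mathlib

section
/- The map φ_{ij}^{(1)} : ℤ³ → ℤ³ given by (z₁, z₂, z₃) ↦ (max(z₃, z₂ - z₁), z₁ + z₃, -max(-z₁, z₃ - z₂)) is a bijection on ℤ³, with inverse given by the same formula with the roles of i and j swapped. -/
/-- The braid-type isomorphism φ_{ij}^{(1)} : ℤ³ → ℤ³ is a bijection whose
inverse is given by the same formula (with the roles of i and j swapped). -/
theorem stmt1 :
    Function.Bijective
      (fun z : ℤ × ℤ × ℤ =>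
        (max z.2.2 (z.2.1 - z.1), z.1 + z.2.2, -max (-z.1) (z.2.2 - z.2.1))) ∧
    ∀ z : ℤ × ℤ × ℤ,
      (fun z : ℤ × ℤ × ℤ =>
        (max z.2.2 (z.2.1 - z.1), z.1 + z.2.2, -max (-z.1) (z.2.2 - z.2.1)))
      ((fun z : ℤ × ℤ × ℤ =>
        (max z.2.2 (z.2.1 - z.1), z.1 + z.2.2, -max (-z.1) (z.2.2 - z.2.1))) z) = z := by
  have hinv : ∀ z : ℤ × ℤ × ℤ,
      (fun z : ℤ × ℤ × ℤ =>
        (max z.2.2 (z.2.1 - z.1), z.1 + z.2.2, -max (-z.1) (z.2.2 - z.2.1)))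
      ((fun z : ℤ × ℤ × ℤ =>
        (max z.2.2 (z.2.1 - z.1), z.1 + z.2.2, -max (-z.1) (z.2.2 - z.2.1))) z) = z := by
    rintro ⟨a, b, c⟩
    simp only [Prod.mk.injEq]
    omega
  exact ⟨Function.Involutive.bijective hinv, hinv⟩
end

section
/- For type A_n with reduced longest word 𝐢 = (1)(21)⋯(n⋯21), let x ∈ ℤ^{n(n+1)/2} have coordinates z_{j,k} (the j-th occurrence of letter k from left to right), with the convention z_{j,0} = 0. Suppose: (a) for every i with 1 ≤ i ≤ n, max_{1 ≤ k ≤ i}(z_{n-i+2, k-1} - z_{n-i+1, k}) = 0 (interpreted as ε_i*(x) = 0, where in particular z_{n,1} = 0 for i = 1); and (b) for every i with 1 ≤ i ≤ n, Σ_{j=1}^{n-i+1} z_{j,i} = 0 (weight zero). Then z_{j,k} = 0 for all j, k. -/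
/-- Type A_n, longest word 𝐢 = (1)(21)⋯(n⋯21): if ε_i*(x) = 0 for all i and wt(x) = 0,
then all coordinates z_{j,k} vanish. -/
theorem stmt5 (n : ℕ) (hn : 1 ≤ n) (z : ℕ → ℕ → ℤ)
    (hz0 : ∀ j, z j 0 = 0)
    (ha : ∀ i, ∀ h1 : 1 ≤ i, i ≤ n →
      (Finset.Icc 1 i).sup' (Finset.nonempty_Icc.mpr h1)
        (fun k => z (n - i + 2) (k - 1) - z (n - i + 1) k) = 0)
    (hb : ∀ i, 1 ≤ i → i ≤ n → ∑ j ∈ Finset.Icc 1 (n - i + 1), z j i = 0) :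
    ∀ j k, 1 ≤ j → 1 ≤ k → j + k ≤ n + 1 → z j k = 0 := by
  have hnn : ∀ k j, 1 ≤ j → 1 ≤ k → j + k ≤ n + 1 → 0 ≤ z j k := by
    intro k
    induction k with
    | zero => intro j _ hk _; omega
    | succ k ih =>
      intro j hj _ hjk
      have hi1 : 1 ≤ n - j + 1 := by omega
      have hsup := ha (n - j + 1) hi1 (by omega)
      have hmem : (k + 1) ∈ Finset.Icc 1 (n - j + 1) := by
        simp only [Finset.mem_Icc]; omega
      have hle := Finset.le_sup'
        (f := fun k => z (n - (n - j + 1) + 2) (k - 1) - z (n - (n - j + 1) + 1) k) hmem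
      rw [hsup] at hle
      have e1 : n - (n - j + 1) + 2 = j + 1 := by omega
      have e2 : n - (n - j + 1) + 1 = j := by omega
      simp only [e1, e2, Nat.add_sub_cancel] at hle
      -- hle : z (j+1) k - z j (k+1) ≤ 0
      rcases Nat.eq_zero_or_pos k with hk0 | hk0
      · subst hk0
        have h0 := hz0 (j + 1)
        linarith
      · have h0 : 0 ≤ z (j + 1) k := ih (j + 1) (by omega) hk0 (by omega)
        linarith
  intro j k hj hk hjk
  have hsum := hb k hk (by omega)
  have hall := (Finset.sum_eq_zero_iff_of_nonneg (fun j' hj' => by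
    simp only [Finset.mem_Icc] at hj'
    exact hnn k j' hj'.1 hk (by omega))).mp hsum
  exact hall j (by simp only [Finset.mem_Icc]; omega)
end
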